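/- Let e be an edge of a simple graph and let f^n_e denote the number of n-cycles of the graph containing e (with faces inserted only so that the augmented complex is quasiconvex). Then the augmented Forman-Ricci curvature F_Aug(e) = 2 + |f_e| − #{e' ≠ e : e' shares a node xor a face with e} equals F(e) + Σ_{n≥3} (6 − n)·|f^n_e|, where F(e) = 4 − deg(v1) − deg(v2), provided every edge e' ≠ e sharing a face with e shares either a node or exactly one face with e but not both being counted doubly (quasiconvexity: any two faces share at most one edge). -/

import Mathlib

open SimpleGraph

lemma countP_or_split {α : Type*} (p q : α → Bool)
    (l : List α) (h : ∀ a ∈ l, ¬(p a ∧ q a)) :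
    l.countP (fun a => p a || q a) = l.countP p + l.countP q := by
  induction l with
  | nil => simp
  | cons a l ih =>
    have ha := h a List.mem_cons_self
    have ih' := ih (fun a ha => h a (List.mem_cons_of_mem _ ha))
    rcases hp : p a <;> rcases hq : q a <;> simp_all [List.countP_cons] <;> omega

lemma cycle_two_incident {V : Type*} [DecidableEq V] {G : SimpleGraph V} {u : V}
    {p : G.Walk u u} (hp : p.IsCycle) {v : V} (hv : v ∈ p.support) :
    (p.edges.toFinset.filter (fun e' => v ∈ e')).card = 2 := by
  classical
  have hnd : p.edges.Nodup := hp.isTrail.edges_nodup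
  have hbridge : Finset.filter (fun e' => v ∈ e') p.edges.toFinset
      = (p.edges.filter (fun e' => decide (v ∈ e'))).toFinset := by
    ext a; simp [List.mem_filter]
  rw [hbridge, List.toFinset_card_of_nodup (hnd.filter _),
    ← List.countP_eq_length_filter]
  have hedges : p.edges = p.darts.map SimpleGraph.Dart.edge := rfl
  rw [hedges, List.countP_map]
  have hq : ∀ l : List V, l.countP (fun x => decide (v = x)) = l.count v := by
    intro l
    rw [List.count_eq_countP]
    apply List.countP_congr
    intro a _
    by_cases hav : a = v
    · subst hav; simp
    · simp only [decide_eq_true_eq, beq_iff_eq]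
      exact eq_comm
  have hsplit : p.darts.countP ((fun e' => decide (v ∈ e')) ∘ SimpleGraph.Dart.edge)
      = p.darts.countP (fun d => decide (v = d.fst)) +
        p.darts.countP (fun d => decide (v = d.snd)) := by
    have hor := countP_or_split (fun d : G.Dart => decide (v = d.fst))
      (fun d => decide (v = d.snd)) p.darts
      (fun d _ hd => by
        have h1 : v = d.fst := by simpa using hd.1
        have h2 : v = d.snd := by simpa using hd.2
        exact d.adj.ne (h1 ▸ h2))
    rw [← hor]
    apply List.countP_congr
    intro d _
    have : (v ∈ d.edge) ↔ (v = d.fst ∨ v = d.snd) := Sym2.mem_iff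
    simp [Function.comp, this]
  rw [hsplit]
  have h1 : p.darts.countP (fun d => decide (v = d.fst)) = p.support.dropLast.count v := by
    rw [← hq, ← SimpleGraph.Walk.map_fst_darts, List.countP_map]
    rfl
  have h2 : p.darts.countP (fun d => decide (v = d.snd)) = p.support.tail.count v := by
    rw [← hq, ← SimpleGraph.Walk.map_snd_darts, List.countP_map]
    rfl
  have htailne : p.support.tail ≠ [] := by
    have h3 := hp.three_le_length
    have hl : p.support.length = p.length + 1 := SimpleGraph.Walk.length_support p
    intro hcon
    have hz : p.support.tail.length = 0 := by rw [hcon]; rfl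
    rw [List.length_tail] at hz
    omega
  have hvtail : v ∈ p.support.tail := by
    have hutail : u ∈ p.support.tail := by
      have h5 : p.support.getLast? = some u := by
        rw [List.getLast?_eq_getLast p.support_ne_nil, p.getLast_support]
      have h6 : p.support.tail.getLast? = some u := by
        rw [p.support_eq_cons] at h5
        cases hts : p.support.tail with
        | nil => exact absurd hts htailne
        | cons b t' =>
          rw [hts] at h5
          rwa [List.getLast?_cons_cons] at h5
      exact List.mem_of_getLast? h6
    rcases (by rw [p.support_eq_cons] at hv; exact List.mem_cons.mp hv : v = u ∨ v ∈ p.support.tail) with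
      h' | hmem'
    · rw [h']; exact hutail
    · exact hmem'
  have hcnt_tail : p.support.tail.count v = 1 :=
    List.count_eq_one_of_mem hp.support_nodup hvtail
  have hcnt_drop : p.support.dropLast.count v = 1 := by
    have hne : p.support ≠ [] := p.support_ne_nil
    have hsplit2 : p.support.dropLast ++ [u] = p.support := by
      have hdg := List.dropLast_append_getLast hne
      rwa [p.getLast_support] at hdg
    have e1 : p.support.count v = p.support.dropLast.count v + [u].count v := by
      conv_lhs => rw [← hsplit2]
      rw [List.count_append]
    have e2 : p.support.count v = [u].count v + p.support.tail.count v := by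
      conv_lhs => rw [p.support_eq_cons]
      rw [List.count_cons]
      simp [List.count_singleton']
      omega
    omega
  omega

open SimpleGraph
open Finset

lemma face_filter_card {V : Type*} [DecidableEq V] {G : SimpleGraph V}
    {f : Finset (Sym2 V)}
    (hf : ∃ (u : V) (p : G.Walk u u), p.IsCycle ∧ p.edges.toFinset = f)
    {v1 v2 : V} (h : G.Adj v1 v2) (he : s(v1, v2) ∈ f) :
    (f.filter (fun e' => v1 ∈ e' ∨ v2 ∈ e')).card = 3 := by
  classical
  obtain ⟨u, p, hpc, rfl⟩ := hf
  have he' : s(v1, v2) ∈ p.edges := List.mem_toFinset.mp he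
  have hv1 : v1 ∈ p.support := SimpleGraph.Walk.fst_mem_support_of_mem_edges p he'
  have hv2 : v2 ∈ p.support := SimpleGraph.Walk.snd_mem_support_of_mem_edges p he'
  have c1 : (p.edges.toFinset.filter (fun e' => v1 ∈ e')).card = 2 :=
    cycle_two_incident hpc hv1
  have c2 : (p.edges.toFinset.filter (fun e' => v2 ∈ e')).card = 2 :=
    cycle_two_incident hpc hv2
  have hinter : (p.edges.toFinset.filter (fun e' => v1 ∈ e')) ∩
      (p.edges.toFinset.filter (fun e' => v2 ∈ e')) = {s(v1, v2)} := by
    ext a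
    simp only [Finset.mem_inter, Finset.mem_filter, Finset.mem_singleton]
    constructor
    · rintro ⟨⟨ha, h1⟩, ⟨-, h2⟩⟩
      exact (Sym2.mem_and_mem_iff h.ne).mp ⟨h1, h2⟩
    · rintro rfl
      refine ⟨⟨he, ?_⟩, ⟨he, ?_⟩⟩
      · exact Sym2.mem_mk_left _ _
      · exact Sym2.mem_mk_right _ _
  have hun := Finset.card_union_add_card_inter
    (p.edges.toFinset.filter (fun e' => v1 ∈ e'))
    (p.edges.toFinset.filter (fun e' => v2 ∈ e'))
  rw [← Finset.filter_or, hinter, c1, c2, Finset.card_singleton] at hun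
  omega

set_option maxHeartbeats 1000000 in
/-- Let `e = (v1,v2)` be an edge of a simple graph and insert a 2-face into
each of a collection of cycles of the graph, so that the resulting augmented complex is
quasiconvex (any two faces share at most one edge).  Let `|f^n_e|` be the number of
`n`-gonal faces containing `e` and `|f_e|` the total number of faces containing `e`.
Then the augmented Forman–Ricci curvature
`F_Aug(e) = 2 + |f_e| − #{e' ≠ e : e' shares a node xor a face with e}`
equals `F(e) + Σ_{n ≥ 3} (6 − n)·|f^n_e|`, where `F(e) = 4 − deg(v1) − deg(v2)`
(the sum over `n` being written as a sum of `6 − card f` over the faces `f` containing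
`e`). -/
theorem stmt5 {V : Type*} [Fintype V] [DecidableEq V] (G : SimpleGraph V)
    [DecidableRel G.Adj]
    (faces : Finset (Finset (Sym2 V)))
    (hcycle : ∀ f ∈ faces, ∃ (u : V) (p : G.Walk u u), p.IsCycle ∧ p.edges.toFinset = f)
    (hquasi : ∀ f ∈ faces, ∀ g ∈ faces, f ≠ g → (f ∩ g).card ≤ 1)
    (v1 v2 : V) (h : G.Adj v1 v2) :
    (2 : ℤ) + ((faces.filter (fun f => s(v1, v2) ∈ f)).card : ℤ)
      - ({e' : Sym2 V | e' ∈ G.edgeSet ∧ e' ≠ s(v1, v2) ∧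
            Xor' (∃ v, v ∈ e' ∧ v ∈ s(v1, v2))
                 (∃ f ∈ faces, s(v1, v2) ∈ f ∧ e' ∈ f)}.ncard : ℤ)
      = (4 - (G.degree v1 : ℤ) - (G.degree v2 : ℤ))
        + ∑ f ∈ faces.filter (fun f => s(v1, v2) ∈ f), ((6 : ℤ) - (f.card : ℤ)) := by
  classical
  set e : Sym2 V := s(v1, v2) with he_def
  set F : Finset (Finset (Sym2 V)) := faces.filter (fun f => e ∈ f) with hF_def
  set P : Sym2 V → Prop := fun e' => v1 ∈ e' ∨ v2 ∈ e' with hP_def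
  set Q : Sym2 V → Prop := fun e' => ∃ f ∈ faces, e ∈ f ∧ e' ∈ f with hQ_def
  have hPiff : ∀ e' : Sym2 V, (∃ v, v ∈ e' ∧ v ∈ e) ↔ P e' := by
    intro e'
    constructor
    · rintro ⟨v, hv, hve⟩
      rcases Sym2.mem_iff.mp hve with rfl | rfl
      · exact Or.inl hv
      · exact Or.inr hv
    · rintro (hv | hv)
      · exact ⟨v1, hv, Sym2.mem_mk_left _ _⟩
      · exact ⟨v2, hv, Sym2.mem_mk_right _ _⟩
  have hface_sub : ∀ f ∈ faces, f ⊆ G.edgeFinset := by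
    intro f hf
    obtain ⟨u, p, hpc, rfl⟩ := hcycle f hf
    intro a ha
    rw [SimpleGraph.mem_edgeFinset]
    exact p.edges_subset_edgeSet (List.mem_toFinset.mp ha)
  set A : Finset (Sym2 V) := G.edgeFinset.filter (fun e' => e' ≠ e ∧ P e') with hA_def
  set B : Finset (Sym2 V) := G.edgeFinset.filter (fun e' => e' ≠ e ∧ Q e') with hB_def
  set T : Finset (Sym2 V) := G.edgeFinset.filter (fun e' => e' ≠ e ∧ Xor' (P e') (Q e'))
    with hT_def
  -- the set in the statement is ↑T
  have hset : {e' : Sym2 V | e' ∈ G.edgeSet ∧ e' ≠ e ∧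
      Xor' (∃ v, v ∈ e' ∧ v ∈ e) (∃ f ∈ faces, e ∈ f ∧ e' ∈ f)} = (↑T : Set (Sym2 V)) := by
    ext e'
    simp only [Set.mem_setOf_eq, hT_def, Finset.coe_filter, SimpleGraph.mem_edgeFinset]
    constructor
    · rintro ⟨h1, h2, h3⟩
      refine ⟨h1, h2, ?_⟩
      rcases h3 with ⟨ha, hb⟩ | ⟨ha, hb⟩
      · exact Or.inl ⟨(hPiff e').mp ha, hb⟩
      · exact Or.inr ⟨ha, fun hc => hb ((hPiff e').mpr hc)⟩
    · rintro ⟨h1, h2, h3⟩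
      refine ⟨h1, h2, ?_⟩
      rcases h3 with ⟨ha, hb⟩ | ⟨ha, hb⟩
      · exact Or.inl ⟨(hPiff e').mpr ha, hb⟩
      · exact Or.inr ⟨ha, fun hc => hb ((hPiff e').mp hc)⟩
  have hncard : ({e' : Sym2 V | e' ∈ G.edgeSet ∧ e' ≠ e ∧
      Xor' (∃ v, v ∈ e' ∧ v ∈ e) (∃ f ∈ faces, e ∈ f ∧ e' ∈ f)}.ncard) = T.card := by
    rw [hset, Set.ncard_coe_finset]
  -- T as a disjoint union of differences
  have hTsplit : T = (A \ B) ∪ (B \ A) := by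
    ext a
    constructor
    · intro ha
      obtain ⟨hedge, hne, hx⟩ := Finset.mem_filter.mp ha
      rcases hx with ⟨hp, hq⟩ | ⟨hq, hp⟩
      · refine Finset.mem_union.mpr (Or.inl (Finset.mem_sdiff.mpr ⟨?_, ?_⟩))
        · exact Finset.mem_filter.mpr ⟨hedge, hne, hp⟩
        · exact fun hb => hq (Finset.mem_filter.mp hb).2.2
      · refine Finset.mem_union.mpr (Or.inr (Finset.mem_sdiff.mpr ⟨?_, ?_⟩))
        · exact Finset.mem_filter.mpr ⟨hedge, hne, hq⟩
        · exact fun hb => hp (Finset.mem_filter.mp hb).2.2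
    · intro ha
      rcases Finset.mem_union.mp ha with hb | hb <;> rw [Finset.mem_sdiff] at hb
      · obtain ⟨ha1, ha2⟩ := hb
        obtain ⟨hedge, hne, hp⟩ := Finset.mem_filter.mp ha1
        exact Finset.mem_filter.mpr ⟨hedge, hne,
          Or.inl ⟨hp, fun hq => ha2 (Finset.mem_filter.mpr ⟨hedge, hne, hq⟩)⟩⟩
      · obtain ⟨ha1, ha2⟩ := hb
        obtain ⟨hedge, hne, hq⟩ := Finset.mem_filter.mp ha1
        exact Finset.mem_filter.mpr ⟨hedge, hne,
          Or.inr ⟨hq, fun hp => ha2 (Finset.mem_filter.mpr ⟨hedge, hne, hp⟩)⟩⟩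
  have hTcard : T.card = (A \ B).card + (B \ A).card := by
    rw [hTsplit]
    exact Finset.card_union_of_disjoint disjoint_sdiff_sdiff
  have hAB1 := Finset.card_inter_add_card_sdiff A B
  have hAB2 := Finset.card_inter_add_card_sdiff B A
  rw [Finset.inter_comm B A] at hAB2
  -- |A| = deg v1 + deg v2 - 2
  have hAcard : A.card + 2 = G.degree v1 + G.degree v2 := by
    have hA_eq : A = ((G.incidenceFinset v1) ∪ (G.incidenceFinset v2)).erase e := by
      ext a
      simp only [hA_def, Finset.mem_filter, Finset.mem_erase, Finset.mem_union,
        SimpleGraph.mem_incidenceFinset, SimpleGraph.incidenceSet,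
        SimpleGraph.mem_edgeFinset, Set.mem_setOf_eq, hP_def]
      tauto
    have he_mem : e ∈ G.incidenceFinset v1 ∪ G.incidenceFinset v2 := by
      rw [Finset.mem_union, SimpleGraph.mem_incidenceFinset]
      exact Or.inl ⟨h, Sym2.mem_mk_left _ _⟩
    have h1 : A.card + 1 = (G.incidenceFinset v1 ∪ G.incidenceFinset v2).card := by
      rw [hA_eq]
      exact Finset.card_erase_add_one he_mem
    have hint : G.incidenceFinset v1 ∩ G.incidenceFinset v2 = {e} := by
      ext a
      simp only [Finset.mem_inter, SimpleGraph.mem_incidenceFinset,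
        SimpleGraph.incidenceSet, Set.mem_setOf_eq, Finset.mem_singleton]
      constructor
      · rintro ⟨⟨-, h1'⟩, ⟨-, h2'⟩⟩
        exact (Sym2.mem_and_mem_iff h.ne).mp ⟨h1', h2'⟩
      · rintro rfl
        exact ⟨⟨h, Sym2.mem_mk_left _ _⟩, ⟨h, Sym2.mem_mk_right _ _⟩⟩
    have h2 := Finset.card_union_add_card_inter (G.incidenceFinset v1) (G.incidenceFinset v2)
    rw [hint, Finset.card_singleton, G.card_incidenceFinset_eq_degree,
      G.card_incidenceFinset_eq_degree] at h2
    omega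
  -- disjointness of faces minus e
  have hdisj : ∀ f ∈ F, ∀ g ∈ F, f ≠ g → Disjoint (f.erase e) (g.erase e) := by
    intro f hf g hg hfg
    rw [Finset.disjoint_left]
    intro a haf hag
    rw [Finset.mem_erase] at haf hag
    have hfF := Finset.mem_filter.mp hf
    have hgF := Finset.mem_filter.mp hg
    have hsub : ({a, e} : Finset (Sym2 V)) ⊆ f ∩ g := by
      intro x hx
      rcases Finset.mem_insert.mp hx with rfl | hx
      · exact Finset.mem_inter.mpr ⟨haf.2, hag.2⟩
      · rw [Finset.mem_singleton] at hx
        subst hx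
        exact Finset.mem_inter.mpr ⟨hfF.2, hgF.2⟩
    have hc2 : ({a, e} : Finset (Sym2 V)).card = 2 := by
      rw [Finset.card_insert_of_notMem (by simp [haf.1]), Finset.card_singleton]
    have := Finset.card_le_card hsub
    have := hquasi f hfF.1 g hgF.1 hfg
    omega
  -- B as biUnion
  have hB_eq : B = F.biUnion (fun f => f.erase e) := by
    ext a
    simp only [hB_def, hQ_def, Finset.mem_filter, Finset.mem_biUnion, Finset.mem_erase, hF_def]
    constructor
    · rintro ⟨hedge, hne, f, hf, hef, haf⟩
      exact ⟨f, ⟨hf, hef⟩, hne, haf⟩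
    · rintro ⟨f, ⟨hf1, hf2⟩, hne, haf⟩
      exact ⟨hface_sub f hf1 haf, hne, f, hf1, hf2, haf⟩
  have hBcard : B.card = ∑ f ∈ F, (f.erase e).card := by
    rw [hB_eq]
    exact Finset.card_biUnion hdisj
  -- A ∩ B
  have hABeq : A ∩ B = F.biUnion (fun f => (f.erase e).filter P) := by
    ext a
    simp only [hA_def, hB_def, hQ_def, Finset.mem_inter, Finset.mem_filter,
      Finset.mem_biUnion, Finset.mem_erase, hF_def]
    constructor
    · rintro ⟨⟨hedge, hne, hp⟩, -, -, f, hf, hef, haf⟩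
      exact ⟨f, ⟨hf, hef⟩, ⟨hne, haf⟩, hp⟩
    · rintro ⟨f, ⟨hf1, hf2⟩, ⟨hne, haf⟩, hp⟩
      exact ⟨⟨hface_sub f hf1 haf, hne, hp⟩,
        hface_sub f hf1 haf, hne, f, hf1, hf2, haf⟩
  have hABcard : (A ∩ B).card = 2 * F.card := by
    rw [hABeq, Finset.card_biUnion (fun f hf g hg hfg =>
      (hdisj f hf g hg hfg).mono (Finset.filter_subset _ _) (Finset.filter_subset _ _))]
    rw [Finset.sum_congr rfl (fun f hf => ?_), Finset.sum_const, smul_eq_mul, mul_comm]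
    have hfF := Finset.mem_filter.mp hf
    have h3 : (f.filter P).card = 3 := face_filter_card (hcycle f hfF.1) h hfF.2
    have heP : e ∈ f.filter P := by
      rw [Finset.mem_filter]
      exact ⟨hfF.2, Or.inl (Sym2.mem_mk_left _ _)⟩
    rw [Finset.filter_erase, Finset.card_erase_of_mem heP, h3]
  -- sums over F in ℤ
  have hBsum : (B.card : ℤ) = (∑ f ∈ F, (f.card : ℤ)) - F.card := by
    have herase : ∀ f ∈ F, ((f.erase e).card : ℤ) = (f.card : ℤ) - 1 := by
      intro f hf
      have hfF := Finset.mem_filter.mp hf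
      have := Finset.card_erase_add_one hfF.2
      omega
    rw [hBcard]
    push_cast
    rw [Finset.sum_congr rfl herase, Finset.sum_sub_distrib, Finset.sum_const]
    ring
  have hsum6 : ∑ f ∈ F, ((6 : ℤ) - (f.card : ℤ)) = 6 * F.card - ∑ f ∈ F, (f.card : ℤ) := by
    rw [Finset.sum_sub_distrib, Finset.sum_const]
    ring
  have hTZ : (T.card : ℤ) = (A.card : ℤ) + (B.card : ℤ) - 2 * ((A ∩ B).card : ℤ) := by
    omega
  have hAZ : (A.card : ℤ) + 2 = (G.degree v1 : ℤ) + (G.degree v2 : ℤ) := by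
    exact_mod_cast hAcard
  have hABZ : ((A ∩ B).card : ℤ) = 2 * (F.card : ℤ) := by
    exact_mod_cast hABcard
  rw [hncard, hsum6]
  linarith [hTZ, hAZ, hABZ, hBsum]
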